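/- arXiv:2505.11302 — 4 statements merged into one kernel-verified Lean document; each statement's English description precedes it below -/
import Mathlib

section
/- Let B be a balanced parenthesis sequence, let i be a position with B[i] = '(', and let c = find_close(B,i). If j is any position with j + (c - i) ≤ |B| such that the substring B[j..j+(c-i)] is equal to B[i..c], then B[j] = '(' and find_close(B,j) = j + (c - i). (Hence the parenthesis segment generated by the subtree starting at position j is exactly B[j..j+(c-i)], and the two subtrees are identical.) -/
/-- A balanced parenthesis sequence over the alphabet {'(',')'}, encoded as
`List Bool` with `true` = '(' and `false` = ')'. -/
def isBalanced (B : List Bool) : Prop :=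
  B.count true = B.count false ∧
  ∀ p : ℕ, (B.take p).count false ≤ (B.take p).count true

/-- The (1-based) substring `B[i..c]`, from position `i` to position `c` inclusive. -/
def seg (B : List Bool) (i c : ℕ) : List Bool :=
  (B.drop (i - 1)).take (c - i + 1)

/-- `c` is a position with `i < c ≤ |B|` such that `B[i..c]` contains
equally many '(' and ')'. -/
def matchAt (B : List Bool) (i c : ℕ) : Prop :=
  i < c ∧ c ≤ B.length ∧ (seg B i c).count true = (seg B i c).count false

/-- `c = find_close(B,i)`: the smallest `c > i` such that `B[i..c]` contains
equally many '(' and ')'. -/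
def isFindClose (B : List Bool) (i c : ℕ) : Prop :=
  matchAt B i c ∧ ∀ c', matchAt B i c' → c ≤ c'

lemma seg_getElem?_zero (B : List Bool) (a b : ℕ) : (seg B a b)[0]? = B[a-1]? := by
  simp [seg, List.getElem?_take, List.getElem?_drop]

/-- if `B` is balanced, `B[i] = '('`, `c = find_close(B,i)`, and
`j` is a position with `j + (c - i) ≤ |B|` such that `B[j..j+(c-i)] = B[i..c]`,
then `B[j] = '('` and `find_close(B,j) = j + (c - i)`. -/
theorem stmt2 (B : List Bool) (i c j : ℕ)
    (hB : isBalanced B) (h1 : 1 ≤ i) (h2 : i ≤ B.length)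
    (hi : B[i - 1]? = some true) (hc : isFindClose B i c)
    (hj1 : 1 ≤ j) (hj2 : j + (c - i) ≤ B.length)
    (heq : seg B j (j + (c - i)) = seg B i c) :
    B[j - 1]? = some true ∧ isFindClose B j (j + (c - i)) := by
  obtain ⟨⟨hic, hcl, hcnt⟩, hmin⟩ := hc
  set d := c - i with hd
  have hdc : c = i + d := by omega
  have hd1 : 1 ≤ d := by omega
  have hfirst : B[j - 1]? = some true := by
    have := seg_getElem?_zero B j (j + d)
    rw [heq, seg_getElem?_zero] at this
    rw [← this, hi]
  refine ⟨hfirst, ⟨⟨by omega, hj2, by rw [heq]; exact hcnt⟩, ?_⟩⟩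
  rintro c' ⟨hjc', hc'l, hc'cnt⟩
  by_contra h
  push_neg at h
  set e := c' - j with he
  have key : seg B j c' = seg B i (i + e) := by
    have ha : seg B j c' = (seg B j (j + d)).take (e + 1) := by
      simp only [seg, List.take_take]
      congr 1
      omega
    have hb : seg B i (i + e) = (seg B i c).take (e + 1) := by
      simp only [seg, List.take_take]
      congr 1
      omega
    rw [ha, heq, hb]
  have hm : matchAt B i (i + e) := by
    refine ⟨by omega, by omega, ?_⟩
    rw [← key]; exact hc'cnt
  have := hmin _ hm
  omega
end

section
/- Let B be a balanced parenthesis sequence, let p and q be positions with B[p] = B[q] = '(', let c = find_close(B,p), and assume q + (c - p) ≤ |B|. Then B[p..c] = B[q..q+(c-p)] if and only if the longest common prefix of the two suffixes B[p..|B|] and B[q..|B|] has length at least c - p + 1; and when this holds, find_close(B,q) = q + (c - p). -/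
/-- The length of the longest common prefix of two sequences. -/
def lcpLen : List Bool → List Bool → ℕ
  | a :: s, b :: t => if a = b then lcpLen s t + 1 else 0
  | _, _ => 0


theorem lcp_take : ∀ (n : ℕ) (s t : List Bool), n ≤ s.length → n ≤ t.length →
    (s.take n = t.take n ↔ n ≤ lcpLen s t)
  | 0, s, t, _, _ => by simp
  | n+1, [], t, hs, _ => by simp at hs
  | n+1, _::_, [], _, ht => by simp at ht
  | n+1, a::s, b::t, hs, ht => by
    simp only [List.take_succ_cons, lcpLen, List.cons.injEq]
    by_cases hab : a = b
    · rw [if_pos hab, lcp_take n s t (Nat.succ_le_succ_iff.mp hs) (Nat.succ_le_succ_iff.mp ht)]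
      simp [hab]
    · rw [if_neg hab]
      simp [hab]

/-- for positions `p`, `q` with `B[p] = B[q] = '('`,
`c = find_close(B,p)` and `q + (c - p) ≤ |B|`:
`B[p..c] = B[q..q+(c-p)]` iff the longest common prefix of the suffixes
`B[p..|B|]` and `B[q..|B|]` has length at least `c - p + 1`; and when this
holds, `find_close(B,q) = q + (c - p)`. -/
theorem stmt3 (B : List Bool) (p q c : ℕ)
    (hB : isBalanced B) (hp1 : 1 ≤ p) (hp2 : p ≤ B.length)
    (hq1 : 1 ≤ q) (hq2 : q ≤ B.length)
    (hp : B[p - 1]? = some true) (hq : B[q - 1]? = some true)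
    (hc : isFindClose B p c)
    (hlen : q + (c - p) ≤ B.length) :
    (seg B p c = seg B q (q + (c - p)) ↔
      c - p + 1 ≤ lcpLen (B.drop (p - 1)) (B.drop (q - 1))) ∧
    (seg B p c = seg B q (q + (c - p)) → isFindClose B q (q + (c - p))) := by
  obtain ⟨⟨hpc, hcB, hcnt⟩, hmin⟩ := hc
  have hseg_q : seg B q (q + (c - p)) = (B.drop (q - 1)).take (c - p + 1) := by
    unfold seg; congr 1; omega
  have hlp : c - p + 1 ≤ (B.drop (p - 1)).length := by
    rw [List.length_drop]; omega
  have hlq : c - p + 1 ≤ (B.drop (q - 1)).length := by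
    rw [List.length_drop]; omega
  have hiff : (seg B p c = seg B q (q + (c - p)) ↔
      c - p + 1 ≤ lcpLen (B.drop (p - 1)) (B.drop (q - 1))) := by
    rw [hseg_q]; unfold seg
    exact lcp_take _ _ _ hlp hlq
  refine ⟨hiff, fun heq => ?_⟩
  constructor
  · refine ⟨by omega, hlen, ?_⟩
    rw [← heq]; exact hcnt
  · rintro c' ⟨hqc', hc'B, hcnt'⟩
    by_contra hcon
    have hlt : c' < q + (c - p) := by omega
    have heq' : (B.drop (p - 1)).take (c - p + 1) = (B.drop (q - 1)).take (c - p + 1) := by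
      rw [← hseg_q]; exact heq
    have hkey : seg B p (p + (c' - q)) = seg B q c' := by
      unfold seg
      have h1 : p + (c' - q) - p + 1 = c' - q + 1 := by omega
      rw [h1]
      have h2 : c' - q + 1 ≤ c - p + 1 := by omega
      calc (B.drop (p - 1)).take (c' - q + 1)
          = ((B.drop (p - 1)).take (c - p + 1)).take (c' - q + 1) := by
            rw [List.take_take, Nat.min_eq_left h2]
        _ = ((B.drop (q - 1)).take (c - p + 1)).take (c' - q + 1) := by rw [heq']
        _ = (B.drop (q - 1)).take (c' - q + 1) := by
            rw [List.take_take, Nat.min_eq_left h2]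
    have hm : matchAt B p (p + (c' - q)) := by
      refine ⟨by omega, by omega, ?_⟩
      rw [hkey]; exact hcnt'
    have := hmin _ hm
    omega
end

section
/- Let B be a balanced parenthesis sequence, let i be a position with B[i] = '(', let c = find_close(B,i), and let W be any balanced parenthesis sequence. Then the sequence obtained by replacing the segment B[i..c] with W, namely B[1..i-1] ++ W ++ B[c+1..|B|], is again a balanced parenthesis sequence. (In particular, replacing a pruned subtree's parenthesis segment with the pattern '(())' keeps the Compressed Balanced Parenthesis sequence balanced.) -/
/-- Replacing a count-balanced middle segment of a balanced sequence by a
balanced sequence keeps it balanced. -/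
lemma replace_aux (P S T W : List Bool) (hS : S.count true = S.count false)
    (hW : isBalanced W) (hB : isBalanced (P ++ S ++ T)) :
    isBalanced (P ++ W ++ T) := by
  obtain ⟨hW1, hW2⟩ := hW
  obtain ⟨hB1, hB2⟩ := hB
  constructor
  · simp only [List.count_append] at hB1 ⊢
    omega
  · intro p
    rcases le_or_gt p P.length with h | h
    · have := hB2 p
      simp only [List.take_append, List.length_append] at this ⊢
      rw [show p - P.length = 0 by omega,
        show p - (P.length + S.length) = 0 by omega] at this
      rw [show p - P.length = 0 by omega,
        show p - (P.length + W.length) = 0 by omega]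
      simp only [List.take_zero, List.append_nil] at this ⊢
      exact this
    · rcases le_or_gt p (P.length + W.length) with h' | h'
      · have hP := hB2 P.length
        simp only [List.take_append, List.length_append] at hP
        rw [Nat.sub_self, show P.length - (P.length + S.length) = 0 by omega,
          List.take_length] at hP
        have hw := hW2 (p - P.length)
        simp only [List.take_append, List.length_append]
        rw [show p - (P.length + W.length) = 0 by omega,
          List.take_of_length_le (by omega : P.length ≤ p)]
        simp only [List.take_zero, List.append_nil, List.count_append] at hP ⊢
        omega
      · set q := p - P.length - W.length with hq
        have hP := hB2 (P.length + S.length + q)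
        simp only [List.take_append, List.length_append] at hP ⊢
        rw [List.take_of_length_le (by omega : P.length ≤ P.length + S.length + q),
          List.take_of_length_le (by omega : S.length ≤ P.length + S.length + q - P.length),
          show P.length + S.length + q - (P.length + S.length) = q by omega] at hP
        rw [List.take_of_length_le (by omega : P.length ≤ p),
          List.take_of_length_le (by omega : W.length ≤ p - P.length),
          show p - (P.length + W.length) = q by omega]
        simp only [List.count_append] at hP ⊢
        omega

/-- if `B` is balanced, `B[i] = '('`, `c = find_close(B,i)`,
and `W` is any balanced parenthesis sequence, then
`B[1..i-1] ++ W ++ B[c+1..|B|]` is again a balanced parenthesis sequence. -/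
theorem stmt4 (B W : List Bool) (i c : ℕ)
    (hB : isBalanced B) (hW : isBalanced W)
    (h1 : 1 ≤ i) (h2 : i ≤ B.length)
    (hi : B[i - 1]? = some true) (hc : isFindClose B i c) :
    isBalanced (B.take (i - 1) ++ W ++ B.drop c) := by
  obtain ⟨⟨hic, hcB, hS⟩, _⟩ := hc
  apply replace_aux _ (seg B i c) _ _ hS hW
  have hdecomp : B.take (i - 1) ++ seg B i c ++ B.drop c = B := by
    unfold seg
    rw [show c - i + 1 = c - (i - 1) by omega]
    rw [List.append_assoc]
    rw [show B.drop c = (B.drop (i-1)).drop (c - (i-1)) by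
      rw [List.drop_drop]; congr 1; omega]
    rw [List.take_append_drop, List.take_append_drop]
  rw [hdecomp]
  exact hB
end

section
/- Let T be a finite rooted ordered tree in which every internal node has at least 2 children. Then the string '(())' does not occur as a contiguous factor of the BP encoding E(T). (This is why, in the BP representation of a k²-tree with k² ≥ 4 children per internal node, the special pattern '(())' can unambiguously be used to mark level h−1 internal nodes and pruned subtrees.) -/
/-- A finite rooted ordered tree: a single constructor taking the list of subtrees. -/
inductive OTree where
  | node : List OTree → OTree

/-- The BP encoding: E(node [T₁,…,T_d]) = '(' ++ E(T₁) ++ ⋯ ++ E(T_d) ++ ')',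
with `true` = '(' and `false` = ')'. -/
def enc : OTree → List Bool
  | .node ts => true :: ((ts.attach.map fun ⟨t, _⟩ => enc t).flatten ++ [false])

/-- Every internal node (node with at least one child) has at least 2 children. -/
inductive AllInternalAtLeastTwo : OTree → Prop
  | mk (ts : List OTree) : (ts = [] ∨ 2 ≤ ts.length) →
      (∀ t ∈ ts, AllInternalAtLeastTwo t) → AllInternalAtLeastTwo (.node ts)

namespace Stmt7Aux

abbrev pat : List Bool := [true, true, false, false]

/-- The strengthened invariant. -/
def Good (l : List Bool) : Prop :=
  (∃ m, l = true :: (m ++ [false])) ∧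
    ∀ n : ℕ, ¬ pat <:+: (l ++ List.replicate n false)

lemma enc_node (ts : List OTree) :
    enc (.node ts) = true :: ((ts.map enc).flatten ++ [false]) := by
  rw [enc]
  congr 2
  simp

lemma enc_head (c : OTree) : ∃ m, enc c = true :: m := by
  cases c with
  | node ts => exact ⟨_, by rw [enc]⟩

lemma enc_head2 (c : OTree) :
    enc c = [true, false] ∨ ∃ m, enc c = true :: true :: m := by
  cases c with
  | node ts =>
    rw [enc_node]
    cases ts with
    | nil => left; rfl
    | cons u us =>
      right
      obtain ⟨m, hm⟩ := enc_head u
      exact ⟨m ++ (((us.map enc).flatten) ++ [false]), by simp [hm]⟩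

/-- Positioned decomposition of an infix of an append. -/
lemma infix_append_split {α : Type*} (l x y : List α) (h : l <:+: x ++ y) :
    l <:+: x ∨ l <:+: y ∨
      ∃ u v, u ++ v = l ∧ u ≠ [] ∧ v ≠ [] ∧ u <:+ x ∧ v <+: y := by
  induction x with
  | nil => right; left; simpa using h
  | cons a x' ih =>
    rcases List.infix_cons_iff.mp h with hp | hi
    · -- l is a prefix of (a :: x') ++ y
      by_cases hlen : l.length ≤ (a :: x').length
      · left
        exact (List.prefix_of_prefix_length_le hp (List.prefix_append (a :: x') y) hlen).isInfix
      · right; right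
        push_neg at hlen
        have hxl : (a :: x') <+: l :=
          List.prefix_of_prefix_length_le (List.prefix_append (a :: x') y) hp (le_of_lt hlen)
        obtain ⟨v, hv⟩ := hxl
        refine ⟨a :: x', v, hv, by simp, ?_, List.suffix_refl _, ?_⟩
        · intro hve
          rw [hve, List.append_nil] at hv
          subst hv
          exact lt_irrefl _ hlen
        · obtain ⟨r, hr⟩ := hp
          rw [← hv, List.append_assoc] at hr
          exact ⟨r, List.append_cancel_left hr⟩
    · rcases ih hi with h1 | h1 | ⟨u, v, huv, hu, hv, hus, hvp⟩
      · exact Or.inl (h1.trans ((List.suffix_cons a x').isInfix))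
      · exact Or.inr (Or.inl h1)
      · exact Or.inr (Or.inr ⟨u, v, huv, hu, hv, hus.trans (List.suffix_cons a x'), hvp⟩)

lemma pat_cases (u v : List Bool) (huv : u ++ v = pat) (hu : u ≠ []) (hv : v ≠ []) :
    u = [true] ∨ u = [true, true] ∨ u = [true, true, false] := by
  rcases u with _ | ⟨a, _ | ⟨b, _ | ⟨c, _ | ⟨d, u'⟩⟩⟩⟩ <;> simp_all [pat]

lemma last_of_suffix (u m : List Bool) (b c : Bool) (h : u ++ [b] <:+ m ++ [c]) :
    b = c := by
  rcases h with ⟨s, hs⟩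
  have := congrArg List.getLast? hs
  simpa using this

lemma good_append (a b : List Bool) (ha : Good a) (hb : Good b) : Good (a ++ b) := by
  obtain ⟨⟨ma, rfl⟩, hna⟩ := ha
  obtain ⟨⟨mb, rfl⟩, hnb⟩ := hb
  constructor
  · exact ⟨ma ++ [false] ++ true :: mb, by simp⟩
  · intro n h
    rw [List.append_assoc] at h
    rcases infix_append_split _ _ _ h with h1 | h1 | ⟨u, v, huv, hu, hv, hus, hvp⟩
    · exact hna 0 (by simpa using h1)
    · exact hnb n h1
    · rcases pat_cases u v huv hu hv with hc | hc | hc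
      · subst hc
        have : (true : Bool) = false :=
          last_of_suffix [] (true :: ma) true false (by simpa using hus)
        simp at this
      · subst hc
        have : (true : Bool) = false :=
          last_of_suffix [true] (true :: ma) true false (by simpa using hus)
        simp at this
      · subst hc
        obtain ⟨s, hs⟩ := hus
        refine hna 1 ⟨s, [], ?_⟩
        simp [← hs, pat]

lemma good_flatten (ts : List OTree) (h : ∀ c ∈ ts, Good (enc c)) (hne : ts ≠ []) :
    Good ((ts.map enc).flatten) := by
  induction ts with
  | nil => exact absurd rfl hne
  | cons c cs ih =>
    cases cs with
    | nil => simpa using h c (by simp)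
    | cons d ds =>
      have h1 : Good (enc c) := h c (by simp)
      have h2 : Good (((d :: ds).map enc).flatten) :=
        ih (fun x hx => h x (by simp [hx])) (by simp)
      simpa using good_append _ _ h1 h2

lemma not_pat_infix_replicate (n : ℕ) : ¬ pat <:+: List.replicate n false := by
  intro h
  have : (true : Bool) ∈ List.replicate n false := h.subset (by simp [pat])
  simpa using List.eq_of_mem_replicate this

theorem good_enc : ∀ (T : OTree), AllInternalAtLeastTwo T → Good (enc T)
  | .node ts, .mk _ hlen hall => by
    have hG : ∀ c ∈ ts, Good (enc c) := fun c hc =>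
      good_enc c (hall c hc)
    rw [enc_node]
    rcases hlen with rfl | hlen
    · refine ⟨⟨[], by simp⟩, ?_⟩
      intro n h
      simp only [List.map_nil, List.flatten_nil, List.nil_append] at h
      rcases List.infix_cons_iff.mp h with hp | hi
      · rcases hp with ⟨r, hr⟩
        simp [pat] at hr
      · have : pat <:+: List.replicate (n + 1) false := by
          simpa [List.replicate_succ] using hi
        exact not_pat_infix_replicate _ this
    · -- at least two children
      match ts, hlen with
      | c1 :: c2 :: rest, _ =>
        have hB : Good (((c1 :: c2 :: rest).map enc).flatten) :=
          good_flatten _ hG (by simp)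
        refine ⟨⟨((c1 :: c2 :: rest).map enc).flatten, rfl⟩, ?_⟩
        intro n h
        have hrw : (true :: (((c1 :: c2 :: rest).map enc).flatten ++ [false])) ++
            List.replicate n false =
            true :: (((c1 :: c2 :: rest).map enc).flatten ++
              List.replicate (n + 1) false) := by
          simp [List.replicate_succ, List.append_assoc]
        rw [hrw] at h
        rcases List.infix_cons_iff.mp h with hp | hi
        · -- prefix case: [true,false,false] <+: flatten ++ replicate
          have hp' : [true, false, false] <+:
              ((c1 :: c2 :: rest).map enc).flatten ++ List.replicate (n + 1) false :=
            (List.cons_prefix_cons.mp hp).2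
          obtain ⟨m2, hm2⟩ := enc_head c2
          rcases enc_head2 c1 with hc1 | ⟨m1, hc1⟩
          · rw [show ((c1 :: c2 :: rest).map enc).flatten =
                enc c1 ++ (enc c2 ++ ((rest.map enc).flatten)) by simp, hc1, hm2] at hp'
            simp [List.cons_prefix_cons] at hp'
          · rw [show ((c1 :: c2 :: rest).map enc).flatten =
                enc c1 ++ (enc c2 ++ ((rest.map enc).flatten)) by simp, hc1] at hp'
            simp [List.cons_prefix_cons] at hp'
        · exact hB.2 (n + 1) hi
termination_by T => sizeOf T
decreasing_by
  simp_wf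
  have := List.sizeOf_lt_of_mem hc
  omega

end Stmt7Aux

/-- if every internal node of `T` has at least 2 children, then the
string '(())' (i.e. `[true, true, false, false]`) does not occur as a contiguous
factor of the BP encoding `E(T)`. -/
theorem stmt7 (T : OTree) (h : AllInternalAtLeastTwo T) :
    ¬ [true, true, false, false] <:+: enc T := by
  have := (Stmt7Aux.good_enc T h).2 0
  simpa using this
end
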